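/- Let ω : [0,∞) → [0,∞) be concave with ω(0)=0, and suppose t ↦ ω(eᵗ) is convex. Then ω is differentiable on (0,∞) and ω' is continuous on (0,∞), i.e., ω is of class C¹ on (0,∞). -/

import Mathlib

open Set Filter Topology

/-- For a concave function on `Ici 0`, secant slopes through a fixed point are antitone. -/
lemma aux_slope_anti (ω : ℝ → ℝ) (hconc : ConcaveOn ℝ (Ici 0) ω) {t x y : ℝ}
    (ht : t ∈ Ici (0:ℝ)) (hx : x ∈ Ici (0:ℝ)) (hy : y ∈ Ici (0:ℝ))
    (hxt : x ≠ t) (hyt : y ≠ t) (hxy : x ≤ y) : slope ω t y ≤ slope ω t x := by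
  have h := hconc.neg.secant_mono ht hx hy hxt hyt hxy
  simp only [Pi.neg_apply] at h
  simp only [slope_def_field]
  have e : ∀ u v w : ℝ, (-u - -v) / w = -((u - v) / w) := by intros; ring
  rw [e, e] at h
  linarith

/-- For a convex function on `univ`, a left derivative is at most a right derivative. -/
lemma aux_left_le_right {f : ℝ → ℝ} (hf : ConvexOn ℝ univ f) {a dl dr : ℝ}
    (hl : HasDerivWithinAt f dl (Iio a) a) (hr : HasDerivWithinAt f dr (Ioi a) a) :
    dl ≤ dr := by
  have h1 : ∀ u, a < u → dl ≤ slope f a u := by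
    intro u hu
    apply le_of_tendsto ((hasDerivWithinAt_iff_tendsto_slope' notMem_Iio_self).mp hl)
    filter_upwards [self_mem_nhdsWithin] with s hs
    have hs' : s < a := hs
    simp only [slope_def_field]
    exact hf.secant_mono (mem_univ _) (mem_univ _) (mem_univ _) hs'.ne hu.ne'
      (hs'.le.trans hu.le)
  apply ge_of_tendsto ((hasDerivWithinAt_iff_tendsto_slope' notMem_Ioi_self).mp hr)
  filter_upwards [self_mem_nhdsWithin] with u hu
  exact h1 u hu


lemma aux_main (ω : ℝ → ℝ) (hconc : ConcaveOn ℝ (Ici 0) ω)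
    (hconv : ConvexOn ℝ univ (fun t => ω (Real.exp t)))
    {t : ℝ} (ht : (0:ℝ) < t) :
    ∃ d, HasDerivAt ω d t ∧ (∀ y, t < y → slope ω t y ≤ d) ∧
      (∀ x ∈ Ioo (0:ℝ) t, d ≤ slope ω t x) := by
  have htI : t ∈ Ici (0:ℝ) := ht.le
  set F : ℝ → ℝ := slope ω t with hF
  have anti : ∀ x y : ℝ, x ∈ Ici (0:ℝ) → y ∈ Ici (0:ℝ) → x ≠ t → y ≠ t → x ≤ y →
      F y ≤ F x := fun x y hx hy hxt hyt hxy => aux_slope_anti ω hconc htI hx hy hxt hyt hxy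
  -- Left limit
  have hmonoL : MonotoneOn (fun x => -F x) (Ioo 0 t) := by
    intro x hx y hy hxy
    exact neg_le_neg (anti x y hx.1.le hy.1.le hx.2.ne hy.2.ne hxy)
  have hbddL : BddAbove ((fun x => -F x) '' Ioo 0 t) := by
    refine ⟨-F (t+1), ?_⟩
    rintro _ ⟨x, hx, rfl⟩
    exact neg_le_neg (anti x (t+1) hx.1.le (by linarith [hx.1.trans hx.2] : (0:ℝ) ≤ t+1)
      hx.2.ne (by linarith) (by linarith [hx.2]))
  have hneL : (Ioo (0:ℝ) t).Nonempty := nonempty_Ioo.2 ht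
  have tendL0 := MonotoneOn.tendsto_nhdsWithin_Ioo_left hneL hmonoL hbddL
  set L : ℝ := -sSup ((fun x => -F x) '' Ioo 0 t) with hLdef
  have tendL : Tendsto F (𝓝[<] t) (𝓝 L) := by
    have := tendL0.neg
    simpa using this
  have hL : HasDerivWithinAt ω L (Iio t) t := by
    rw [hasDerivWithinAt_iff_tendsto_slope]
    rw [Set.diff_singleton_eq_self (by simp : t ∉ Iio t)]
    exact tendL
  -- Right limit
  have hmonoR : MonotoneOn (fun x => -F x) (Ioi t) := by
    intro x hx y hy hxy
    exact neg_le_neg (anti x y (ht.trans hx).le (ht.trans hy).le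
      (ne_of_gt hx) (ne_of_gt hy) hxy)
  have hbddR : BddBelow ((fun x => -F x) '' Ioi t) := by
    refine ⟨-F (t/2), ?_⟩
    rintro _ ⟨y, hy, rfl⟩
    exact neg_le_neg (anti (t/2) y (by linarith : (0:ℝ) ≤ t/2) (ht.trans hy).le
      (by linarith : t/2 ≠ t) (ne_of_gt hy) (by linarith [lt_trans (by linarith : t/2 < t) hy]))
  have tendR0 := MonotoneOn.tendsto_nhdsGT hmonoR hbddR
  set R : ℝ := -sInf ((fun x => -F x) '' Ioi t) with hRdef
  have tendR : Tendsto F (𝓝[>] t) (𝓝 R) := by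
    have := tendR0.neg
    simpa using this
  have hR : HasDerivWithinAt ω R (Ioi t) t := by
    rw [hasDerivWithinAt_iff_tendsto_slope]
    rw [Set.diff_singleton_eq_self (by simp : t ∉ Ioi t)]
    exact tendR
  -- slope bounds
  have hRy : ∀ y, t < y → F y ≤ R := by
    intro y hy
    apply ge_of_tendsto tendR
    filter_upwards [Ioo_mem_nhdsGT_of_mem (⟨le_refl t, hy⟩ : t ∈ Ico t y)] with z hz
    exact anti z y (ht.trans hz.1).le (ht.trans hy).le (ne_of_gt hz.1) (ne_of_gt hy) hz.2.le
  have hLx : ∀ x ∈ Ioo (0:ℝ) t, L ≤ F x := by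
    intro x hx
    apply le_of_tendsto tendL
    filter_upwards [Ioo_mem_nhdsLT_of_mem (⟨hx.2, le_refl t⟩ : t ∈ Ioc x t)] with z hz
    exact anti x z hx.1.le (hx.1.trans hz.1).le hx.2.ne hz.2.ne hz.1.le
  -- R ≤ L (concavity)
  have hRL : R ≤ L := by
    have h1 : ∀ x ∈ Ioo (0:ℝ) t, R ≤ F x := by
      intro x hx
      apply le_of_tendsto tendR
      filter_upwards [self_mem_nhdsWithin] with z hz
      have hz' : t < z := hz
      exact anti x z hx.1.le (ht.trans hz').le hx.2.ne hz'.ne' (hx.2.le.trans hz'.le)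
    apply ge_of_tendsto tendL
    filter_upwards [Ioo_mem_nhdsLT_of_mem (⟨ht, le_refl t⟩ : t ∈ Ioc 0 t)] with x hx
    exact h1 x hx
  -- L ≤ R (convexity of ω ∘ exp)
  have hLR : L ≤ R := by
    set a := Real.log t with ha
    have hexp : Real.exp a = t := Real.exp_log ht
    have hder_exp : HasDerivAt Real.exp t a := by
      simpa [hexp] using Real.hasDerivAt_exp a
    have hL' : HasDerivWithinAt ω L (Iio t) (Real.exp a) := by rw [hexp]; exact hL
    have hR' : HasDerivWithinAt ω R (Ioi t) (Real.exp a) := by rw [hexp]; exact hR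
    have mapsL : MapsTo Real.exp (Iio a) (Iio t) := by
      intro s hs
      have : Real.exp s < Real.exp a := Real.exp_lt_exp.2 hs
      simpa [hexp] using this
    have mapsR : MapsTo Real.exp (Ioi a) (Ioi t) := by
      intro s hs
      have : Real.exp a < Real.exp s := Real.exp_lt_exp.2 hs
      simpa [hexp] using this
    have hφL : HasDerivWithinAt (fun s => ω (Real.exp s)) (L * t) (Iio a) a :=
      hL'.comp a hder_exp.hasDerivWithinAt mapsL
    have hφR : HasDerivWithinAt (fun s => ω (Real.exp s)) (R * t) (Ioi a) a :=
      hR'.comp a hder_exp.hasDerivWithinAt mapsR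
    have := aux_left_le_right hconv hφL hφR
    exact le_of_mul_le_mul_right this ht
  have hLeqR : L = R := le_antisymm hLR hRL
  have hcompl : HasDerivWithinAt ω R ({t}ᶜ) t := by
    have h := (hLeqR ▸ hL).union hR
    rwa [Iio_union_Ioi] at h
  have hd : HasDerivAt ω R t := by
    rw [← hasDerivWithinAt_univ]
    rw [compl_eq_univ_diff] at hcompl
    exact hasDerivWithinAt_diff_singleton.mp hcompl
  exact ⟨R, hd, hRy, fun x hx => hLeqR ▸ hLx x hx⟩

theorem stmt9 (ω : ℝ → ℝ) (hpos : ∀ t ≥ (0:ℝ), 0 ≤ ω t)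
    (hconc : ConcaveOn ℝ (Ici 0) ω) (h0 : ω 0 = 0)
    (hconv : ConvexOn ℝ univ (fun t => ω (Real.exp t))) :
    (∀ t ∈ Ioi (0:ℝ), DifferentiableAt ℝ ω t) ∧
    ContinuousOn (deriv ω) (Ioi 0) := by
  -- nonnegativity of slopes
  have hnn : ∀ t ∈ Ici (0:ℝ), ∀ y, t < y → 0 ≤ slope ω t y := by
    intro t ht y hy
    by_contra h
    push_neg at h
    set c := slope ω t y with hc
    have hcneg : c < 0 := h
    set z := max (y + 1) (t + ω t / (-c) + 1) with hz
    have hz1 : y + 1 ≤ z := le_max_left _ _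
    have hz2 : t + ω t / (-c) + 1 ≤ z := le_max_right _ _
    have hty : t < y := hy
    have hyz : y ≤ z := by linarith
    have htz : t < z := lt_of_lt_of_le hty hyz
    have hslope : slope ω t z ≤ c :=
      aux_slope_anti ω hconc ht (ht.trans hty.le) (ht.trans htz.le) hty.ne' htz.ne' hyz
    rw [slope_def_field] at hslope
    have hzt : (0:ℝ) < z - t := by linarith
    have h1 : ω z - ω t ≤ c * (z - t) := by
      rwa [div_le_iff₀ hzt] at hslope
    have hωt : 0 ≤ ω t := hpos t ht
    have hωz : 0 ≤ ω z := hpos z (ht.trans htz.le)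
    have hkey : (-c) * (ω t / (-c)) = ω t := mul_div_cancel₀ _ (by linarith : (-c) ≠ 0)
    nlinarith [mul_le_mul_of_nonneg_left (show ω t / (-c) + 1 ≤ z - t by linarith)
      (show (0:ℝ) ≤ -c by linarith)]
  have key : ∀ t ∈ Ioi (0:ℝ), HasDerivAt ω (deriv ω t) t ∧ 0 ≤ deriv ω t ∧
      (∀ y, t < y → slope ω t y ≤ deriv ω t) ∧
      (∀ x ∈ Ioo (0:ℝ) t, deriv ω t ≤ slope ω t x) := by
    intro t ht
    obtain ⟨d, hd, h1, h2⟩ := aux_main ω hconc hconv ht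
    have hdd : deriv ω t = d := hd.deriv
    rw [hdd]
    refine ⟨hd, ?_, h1, h2⟩
    exact le_trans (hnn t (Set.mem_Ici.2 (le_of_lt ht)) (t+1) (by linarith)) (h1 (t+1) (by linarith))
  constructor
  · intro t ht
    exact ((key t ht).1).differentiableAt
  · -- continuity of the derivative
    have anti : ∀ t₁ ∈ Ioi (0:ℝ), ∀ t₂ ∈ Ioi (0:ℝ), t₁ ≤ t₂ →
        deriv ω t₂ ≤ deriv ω t₁ := by
      intro t₁ h₁ t₂ h₂ h12
      rcases eq_or_lt_of_le h12 with rfl | hlt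
      · exact le_rfl
      · have a1 := (key t₂ h₂).2.2.2 t₁ ⟨h₁, hlt⟩
        have a2 := (key t₁ h₁).2.2.1 t₂ hlt
        rw [slope_comm] at a1
        linarith
    have gmono : ∀ t₁ ∈ Ioi (0:ℝ), ∀ t₂ ∈ Ioi (0:ℝ), t₁ ≤ t₂ →
        t₁ * deriv ω t₁ ≤ t₂ * deriv ω t₂ := by
      intro t₁ h₁ t₂ h₂ h12
      rcases eq_or_lt_of_le h12 with rfl | hlt
      · exact le_rfl
      · have ha : Real.log t₁ < Real.log t₂ := Real.log_lt_log h₁ hlt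
        have hφ : ∀ t ∈ Ioi (0:ℝ), HasDerivAt (fun s => ω (Real.exp s))
            (deriv ω t * t) (Real.log t) := by
          intro t htp
          have hexp : Real.exp (Real.log t) = t := Real.exp_log htp
          have hder_exp : HasDerivAt Real.exp t (Real.log t) := by
            simpa [hexp] using Real.hasDerivAt_exp (Real.log t)
          have h := (key t htp).1
          have h' : HasDerivAt ω (deriv ω t) (Real.exp (Real.log t)) := by rw [hexp]; exact h
          exact h'.comp (Real.log t) hder_exp
        have b1 := hconv.le_slope_of_hasDerivWithinAt (mem_univ _) (mem_univ _) ha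
          ((hφ t₁ h₁).hasDerivWithinAt)
        have b2 := hconv.slope_le_of_hasDerivWithinAt (mem_univ _) (mem_univ _) ha
          ((hφ t₂ h₂).hasDerivWithinAt)
        have := le_trans b1 b2
        linarith [mul_comm (deriv ω t₁) t₁, mul_comm (deriv ω t₂) t₂]
    intro t₀ ht₀
    have ht0 : (0:ℝ) < t₀ := ht₀
    have hD0 : 0 ≤ deriv ω t₀ := (key t₀ ht₀).2.1
    rw [ContinuousWithinAt]
    have hlow : Tendsto (fun t => min (deriv ω t₀) (t₀ * deriv ω t₀ / t)) (𝓝[Ioi 0] t₀)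
        (𝓝 (deriv ω t₀)) := by
      have hct : ContinuousAt (fun t => min (deriv ω t₀) (t₀ * deriv ω t₀ / t)) t₀ :=
        continuousAt_const.min (continuousAt_const.div continuousAt_id ht0.ne')
      have h2 := hct.continuousWithinAt (s := Ioi 0)
      rw [ContinuousWithinAt] at h2
      convert h2 using 2
      rw [mul_div_cancel_left₀ _ ht0.ne', min_self]
    have hhigh : Tendsto (fun t => max (deriv ω t₀) (t₀ * deriv ω t₀ / t)) (𝓝[Ioi 0] t₀)
        (𝓝 (deriv ω t₀)) := by
      have hct : ContinuousAt (fun t => max (deriv ω t₀) (t₀ * deriv ω t₀ / t)) t₀ :=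
        continuousAt_const.max (continuousAt_const.div continuousAt_id ht0.ne')
      have h2 := hct.continuousWithinAt (s := Ioi 0)
      rw [ContinuousWithinAt] at h2
      convert h2 using 2
      rw [mul_div_cancel_left₀ _ ht0.ne', max_self]
    apply tendsto_of_tendsto_of_tendsto_of_le_of_le' hlow hhigh
    · filter_upwards [self_mem_nhdsWithin] with t htI
      have htp : (0:ℝ) < t := htI
      rcases le_total t t₀ with h | h
      · exact le_trans (min_le_left _ _) (anti t htI t₀ ht₀ h)
      · have hg := gmono t₀ ht₀ t htI h
        have : t₀ * deriv ω t₀ / t ≤ deriv ω t := by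
          rw [div_le_iff₀ htp]
          linarith [mul_comm (deriv ω t) t]
        exact le_trans (min_le_right _ _) this
    · filter_upwards [self_mem_nhdsWithin] with t htI
      have htp : (0:ℝ) < t := htI
      rcases le_total t t₀ with h | h
      · have hg := gmono t htI t₀ ht₀ h
        have : deriv ω t ≤ t₀ * deriv ω t₀ / t := by
          rw [le_div_iff₀ htp]
          linarith [mul_comm (deriv ω t) t]
        exact le_trans this (le_max_right _ _)
      · exact le_trans (anti t₀ ht₀ t htI h) (le_max_left _ _)
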